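/- Let A be a real m×n matrix with m ≤ n and rank(A) = m, and let u ∈ ℝⁿ be a unit vector. Set Ā = A·(I - u·uᵀ) and G = Ā·Āᵀ. Then G is invertible if and only if u does not belong to the row space of A (the span of the rows of A, equivalently the range of the linear map y ↦ Aᵀ·y). -/

import Mathlib

open scoped RealInnerProductSpace
open Matrix

/-- for a full-row-rank `m × n` matrix `A` (`m ≤ n`) and a unit
vector `u`, the matrix `G = Ā Āᵀ` with `Ā = A (I - u uᵀ)` is invertible if and
only if `u` does not belong to the row space of `A`. -/
theorem rank_one_modified_gram_invertible_iff {m n : ℕ}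
    (A : Matrix (Fin m) (Fin n) ℝ) (hmn : m ≤ n) (hrank : A.rank = m)
    (u : EuclideanSpace ℝ (Fin n)) (hu : ‖u‖ = 1)
    (Abar : Matrix (Fin m) (Fin n) ℝ) (hAbar : Abar = A * (1 - vecMulVec u u))
    (G : Matrix (Fin m) (Fin m) ℝ) (hG : G = Abar * Abarᵀ) :
    IsUnit G ↔
      u ∉ Submodule.span ℝ (Set.range fun i : Fin m => (WithLp.toLp 2 (A i) : EuclideanSpace ℝ (Fin n))) := by
  subst hAbar hG
  set v : Fin n → ℝ := WithLp.ofLp u with hv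
  -- u has unit dot product with itself
  have hud : v ⬝ᵥ v = 1 := by
    have h1 : ⟪u, u⟫ = (1 : ℝ) := by
      rw [real_inner_self_eq_norm_sq, hu]; norm_num
    simp only [PiLp.inner_apply, RCLike.inner_apply, conj_trivial] at h1
    rw [← h1]; simp only [dotProduct, hv]
  have hu0 : v ≠ 0 := by
    intro h
    have : (0:ℝ) = 1 := by rw [← hud, h]; simp
    norm_num at this
  -- rank-one action
  have hrk1 : ∀ w : Fin n → ℝ, vecMulVec v v *ᵥ w = (v ⬝ᵥ w) • v := by
    intro w; funext i
    simp only [mulVec, vecMulVec_apply, dotProduct, Pi.smul_apply, smul_eq_mul,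
      Finset.sum_mul]
    exact Finset.sum_congr rfl fun j _ => by ring
  -- transpose of Abar acting on vectors
  have hPT : (1 - vecMulVec v v)ᵀ = 1 - vecMulVec v v := by
    rw [transpose_sub, transpose_one]
    congr 1
    ext i j
    simp [vecMulVec_apply, mul_comm]
  have hAbarT : ∀ x : Fin m → ℝ,
      (A * (1 - vecMulVec v v))ᵀ *ᵥ x = Aᵀ *ᵥ x - (v ⬝ᵥ (Aᵀ *ᵥ x)) • v := by
    intro x
    rw [transpose_mul, hPT, ← mulVec_mulVec, sub_mulVec, one_mulVec, hrk1]
  -- injectivity of Aᵀ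
  have hinj : ∀ x : Fin m → ℝ, Aᵀ *ᵥ x = 0 → x = 0 := by
    have h1 : Aᵀ.rank = m := by rw [rank_transpose, hrank]
    have h2 := LinearMap.finrank_range_add_finrank_ker (Aᵀ.mulVecLin)
    rw [Matrix.rank] at h1
    rw [h1] at h2
    simp only [Module.finrank_pi, Fintype.card_fin] at h2
    have hker : Module.finrank ℝ (LinearMap.ker Aᵀ.mulVecLin) = 0 := by omega
    have hbot : LinearMap.ker Aᵀ.mulVecLin = ⊥ := Submodule.finrank_eq_zero.mp hker
    intro x hx
    have hmemk : x ∈ LinearMap.ker Aᵀ.mulVecLin := LinearMap.mem_ker.mpr hx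
    rw [hbot] at hmemk
    simpa using hmemk
  -- span of rows characterization
  have hspan : u ∈ Submodule.span ℝ
      (Set.range fun i : Fin m => (WithLp.toLp 2 (A i) : EuclideanSpace ℝ (Fin n))) ↔
      ∃ c : Fin m → ℝ, Aᵀ *ᵥ c = v := by
    have hsum : ∀ (c : Fin m → ℝ) (j : Fin n),
        (∑ i, c i • (WithLp.toLp 2 (A i) : EuclideanSpace ℝ (Fin n))) j = (Aᵀ *ᵥ c) j := by
      intro c j
      simp [mulVec, dotProduct, Finset.sum_apply, mul_comm]
    rw [Submodule.mem_span_range_iff_exists_fun]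
    constructor
    · rintro ⟨c, hc⟩
      exact ⟨c, funext fun j => ((hsum c j).symm.trans (congrArg (fun w => w j) hc) : _)⟩
    · rintro ⟨c, hc⟩
      exact ⟨c, PiLp.ext fun j => ((hsum c j).trans (congrFun hc j) : _)⟩
  rw [hspan]
  constructor
  · intro hunit hmem
    obtain ⟨c, hc⟩ := hmem
    have hc0 : c ≠ 0 := by
      intro h
      apply hu0
      rw [← hc, h, mulVec_zero]
    apply hc0
    have hzero : ((A * (1 - vecMulVec v v)) * (A * (1 - vecMulVec v v))ᵀ) *ᵥ c = 0 := by
      rw [← mulVec_mulVec, hAbarT, hc, hud, one_smul, sub_self, mulVec_zero]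
    have := Matrix.mulVec_injective_iff_isUnit.mpr hunit
    have h0 : ((A * (1 - vecMulVec v v)) * (A * (1 - vecMulVec v v))ᵀ) *ᵥ (0 : Fin m → ℝ) = 0 := by
      simp
    exact this (hzero.trans h0.symm)
  · intro hmem
    rw [← Matrix.mulVec_injective_iff_isUnit]
    intro x y hxy
    have hz : ((A * (1 - vecMulVec v v)) * (A * (1 - vecMulVec v v))ᵀ) *ᵥ (x - y) = 0 := by
      rw [mulVec_sub, hxy, sub_self]
    set z := x - y with hzdef
    -- show w := Abarᵀ z = 0
    have hw : (A * (1 - vecMulVec v v))ᵀ *ᵥ z = 0 := by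
      have hdot : ((A * (1 - vecMulVec v v))ᵀ *ᵥ z) ⬝ᵥ ((A * (1 - vecMulVec v v))ᵀ *ᵥ z) = 0 := by
        have h := congrArg (fun w => z ⬝ᵥ w) hz
        rw [← mulVec_mulVec, dotProduct_mulVec, ← mulVec_transpose, dotProduct_zero] at h
        exact h
      exact dotProduct_self_eq_zero.mp hdot
    rw [hAbarT] at hw
    have hAz : Aᵀ *ᵥ z = (v ⬝ᵥ (Aᵀ *ᵥ z)) • v := by
      have := sub_eq_zero.mp hw
      exact this
    set c := v ⬝ᵥ (Aᵀ *ᵥ z) with hcdef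
    have hc0 : c = 0 := by
      by_contra hc
      apply hmem
      refine ⟨c⁻¹ • z, ?_⟩
      rw [mulVec_smul, hAz, smul_smul, inv_mul_cancel₀ hc, one_smul]
    rw [hc0, zero_smul] at hAz
    have : z = 0 := hinj z hAz
    exact sub_eq_zero.mp (hzdef ▸ this)
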